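/- Let G be a finite undirected multigraph, let s, t ∈ V(G) with s ≠ t, let Z ⊆ E(G) be a special (s,t)-cut, and let λ* = |Z_{s,t}|. Then there exists a λ*-flow-augmenting multiset A of vertex pairs that is compatible with Z, together with a witnessing (s,t)-flow for Z in G + A of cardinality λ*. -/

import Mathlib

/-!
A finite undirected multigraph (parallel edges allowed, no loops) is modelled by a
vertex type `V`, an edge type `E` (both finite) and an endpoint map `ends : E → Sym2 V`
such that no edge is a loop (`¬ (ends e).IsDiag`).
-/

namespace FlowAug

variable {V E : Type}

/-- Two vertices are adjacent in `G - X` if some edge outside `X` joins them. -/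
def Adj (ends : E → Sym2 V) (X : Set E) (u v : V) : Prop :=
  ∃ e, e ∉ X ∧ ends e = s(u, v)

/-- Reachability in `G - X`. -/
def Reach (ends : E → Sym2 V) (X : Set E) : V → V → Prop :=
  Relation.ReflTransGen (Adj ends X)

/-- `R_S(X)` : the set of vertices reachable from the vertex set `S` in `G - X`. -/
def RS (ends : E → Sym2 V) (X : Set E) (S : Set V) : Set V :=
  {v | ∃ u ∈ S, Reach ends X u v}

/-- `δ(S)` : the set of edges with exactly one endpoint in `S`. -/
def edgeBoundary (ends : E → Sym2 V) (S : Set V) : Set E :=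
  {e | ∃ u v, ends e = s(u, v) ∧ u ∈ S ∧ v ∉ S}

/-- `X` is an `(S,T)`-cut. -/
def IsCut (ends : E → Sym2 V) (X : Set E) (S T : Set V) : Prop :=
  RS ends X S ∩ RS ends X T = ∅

/-- `X` is a minimal `(S,T)`-cut: no proper subset of `X` is an `(S,T)`-cut. -/
def IsMinimalCut (ends : E → Sym2 V) (X : Set E) (S T : Set V) : Prop :=
  IsCut ends X S T ∧ ∀ Y : Set E, Y ⊂ X → ¬ IsCut ends Y S T

/-- `X` is an `(S,T)`-cut of minimum cardinality. -/
def IsMinimumCut (ends : E → Sym2 V) (X : Set E) (S T : Set V) : Prop :=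
  IsCut ends X S T ∧ ∀ Y : Set E, IsCut ends Y S T → X.ncard ≤ Y.ncard

/-- `X` is an `(S,T)`-cut that is closest to `S`: every `(S,T)`-cut `X' ≠ X` with
`R_S(X') ⊆ R_S(X)` satisfies `|X'| > |X|`. -/
def IsClosestCut (ends : E → Sym2 V) (X : Set E) (S T : Set V) : Prop :=
  IsCut ends X S T ∧
    ∀ X' : Set E, IsCut ends X' S T → X' ≠ X →
      RS ends X' S ⊆ RS ends X S → X.ncard < X'.ncard

/-- `λ_G(s,t)` : the minimum cardinality of an `(s,t)`-cut (equivalently, by Menger's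
theorem, the maximum number of pairwise edge-disjoint `(s,t)`-paths). -/
noncomputable def lamCut (ends : E → Sym2 V) (s t : V) : ℕ :=
  sInf {n | ∃ X : Set E, IsCut ends X {s} {t} ∧ X.ncard = n}

/-- `Z_{s,t}` : the edges of `Z` with one endpoint in `R_s(Z)` and one in `R_t(Z)`. -/
def Zst (ends : E → Sym2 V) (s t : V) (Z : Set E) : Set E :=
  {e | e ∈ Z ∧ ∃ u v, ends e = s(u, v) ∧ u ∈ RS ends Z {s} ∧ v ∈ RS ends Z {t}}

/-- `Z` is a special `(s,t)`-cut: `Z` is an `(s,t)`-cut and `Z_{s,t}` is an `(s,t)`-cut. -/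
def IsSpecial (ends : E → Sym2 V) (s t : V) (Z : Set E) : Prop :=
  IsCut ends Z {s} {t} ∧ IsCut ends (Zst ends s t Z) {s} {t}

/-- `Z` is eligible for `(s,t)`: special, and every edge of `Z` has its endpoints in
different connected components of `G - Z`. -/
def IsEligible (ends : E → Sym2 V) (s t : V) (Z : Set E) : Prop :=
  IsSpecial ends s t Z ∧ ∀ e ∈ Z, ∀ u v : V, ends e = s(u, v) → ¬ Reach ends Z u v

/-- `Z` is a star `(s,t)`-cut: an `(s,t)`-cut each of whose edges has exactly one
endpoint in `R_s(Z)`. -/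
def IsStarCut (ends : E → Sym2 V) (s t : V) (Z : Set E) : Prop :=
  IsCut ends Z {s} {t} ∧
    ∀ e ∈ Z, ∃ u v : V, ends e = s(u, v) ∧ u ∈ RS ends Z {s} ∧ v ∉ RS ends Z {s}

/-- A path from `s` to `t` in the multigraph described by `ends`, given by its
sequence of vertices and traversed edges. -/
structure MGPath (V E : Type) (ends : E → Sym2 V) (s t : V) where
  n : ℕ
  vert : Fin (n + 1) → V
  edge : Fin n → E
  vert_zero : vert 0 = s
  vert_last : vert (Fin.last n) = t
  ends_eq : ∀ i : Fin n, ends (edge i) = s(vert i.castSucc, vert i.succ)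

/-- A family of paths is (pairwise) edge-disjoint: no edge is used twice, neither on
a single path nor on two different paths. -/
def EdgeDisjoint {ends : E → Sym2 V} {s t : V} {k : ℕ}
    (P : Fin k → MGPath V E ends s t) : Prop :=
  Function.Injective fun p : (Σ i : Fin k, Fin (P i).n) => (P p.1).edge p.2

/-- `P` is a witnessing `(s,t)`-flow for `Z`: a family of `λ_G(s,t)` pairwise
edge-disjoint `(s,t)`-paths such that every edge of `Z_{s,t}` occurs on a path of `P`
and every path of `P` contains exactly one edge of `Z`. -/
def IsWitnessingFlow (ends : E → Sym2 V) (s t : V) (Z : Set E) {k : ℕ}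
    (P : Fin k → MGPath V E ends s t) : Prop :=
  k = lamCut ends s t ∧ EdgeDisjoint P ∧
    (∀ e ∈ Zst ends s t Z, ∃ (i : Fin k) (j : Fin (P i).n), (P i).edge j = e) ∧
    ∀ i : Fin k, ∃! j : Fin (P i).n, (P i).edge j ∈ Z

/-- The vertices occurring on the paths of a family `P`. -/
def pathVerts {ends : E → Sym2 V} {s t : V} {k : ℕ}
    (P : Fin k → MGPath V E ends s t) : Set V :=
  {v | ∃ (i : Fin k) (m : Fin ((P i).n + 1)), (P i).vert m = v}

/-- The edges occurring on the paths of a family `P`. -/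
def pathEdges {ends : E → Sym2 V} {s t : V} {k : ℕ}
    (P : Fin k → MGPath V E ends s t) : Set E :=
  {e | ∃ (i : Fin k) (j : Fin (P i).n), (P i).edge j = e}

/-- The arcs obtained by orienting every edge of every path of `P` in the forward
direction (from `s` towards `t`). -/
def DirAdjOnFlow {ends : E → Sym2 V} {s t : V} {k : ℕ}
    (P : Fin k → MGPath V E ends s t) (u v : V) : Prop :=
  ∃ (i : Fin k) (l : Fin (P i).n), (P i).vert l.castSucc = u ∧ (P i).vert l.succ = v

/-- `N[S]` : the closed neighborhood of `S`. -/
def closedNbhd (ends : E → Sym2 V) (S : Set V) : Set V :=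
  S ∪ {v | ∃ u ∈ S, ∃ e : E, ends e = s(u, v)}

/-- `X` is the minimum `(s,t)`-cut closest to `s` among all minimum `(s,t)`-cuts
satisfying the property `P`. -/
def IsClosestMinCutAmong (ends : E → Sym2 V) (s t : V) (P : Set E → Prop)
    (X : Set E) : Prop :=
  IsMinimumCut ends X {s} {t} ∧ P X ∧
    ∀ Y : Set E, IsMinimumCut ends Y {s} {t} → P Y → Y ≠ X →
      RS ends Y {s} ⊆ RS ends X {s} → X.ncard < Y.ncard

/-- `C 0, …, C p` is the canonical sequence of non-crossing minimum `(s,t)`-cuts: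
`C 0` is the unique minimum `(s,t)`-cut closest to `s`; `C i` is the unique minimum
`(s,t)`-cut closest to `s` among all minimum `(s,t)`-cuts `X` with
`N[R_s(C (i-1))] ⊆ R_s(X)`; and `p` is the largest index for which such a cut exists. -/
def CanonSeq (ends : E → Sym2 V) (s t : V) (p : ℕ) (C : ℕ → Set E) : Prop :=
  IsClosestMinCutAmong ends s t (fun _ => True) (C 0) ∧
    (∀ i : ℕ, 0 < i → i ≤ p →
      IsClosestMinCutAmong ends s t
        (fun X => closedNbhd ends (RS ends (C (i - 1)) {s}) ⊆ RS ends X {s}) (C i)) ∧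
    ¬ ∃ X : Set E, IsMinimumCut ends X {s} {t} ∧
        closedNbhd ends (RS ends (C p) {s}) ⊆ RS ends X {s}

/-- The blocks `V_0, …, V_{p+1}` associated with the canonical sequence of cuts. -/
def blockOf (ends : E → Sym2 V) (s : V) (p : ℕ) (C : ℕ → Set E) (i : ℕ) : Set V :=
  if i = 0 then RS ends (C 0) {s}
  else if i ≤ p then RS ends (C i) {s} \ RS ends (C (i - 1)) {s}
  else Set.univ \ RS ends (C p) {s}

/-- Adjacency inside the induced subgraph `G[B]`. -/
def AdjIn (ends : E → Sym2 V) (B : Set V) (u v : V) : Prop :=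
  u ∈ B ∧ v ∈ B ∧ ∃ e : E, ends e = s(u, v)

/-- Reachability inside the induced subgraph `G[B]`. -/
def ReachIn (ends : E → Sym2 V) (B : Set V) : V → V → Prop :=
  Relation.ReflTransGen (AdjIn ends B)

/-- The induced subgraph `G[B]` is connected. -/
def ConnIn (ends : E → Sym2 V) (B : Set V) : Prop :=
  ∀ u ∈ B, ∀ v ∈ B, ReachIn ends B u v

/-- The connected component of `u` in the induced subgraph `G[B]`. -/
def compIn (ends : E → Sym2 V) (B : Set V) (u : V) : Set V :=
  {v | v ∈ B ∧ ReachIn ends B u v}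

/-- The set of connected components of the induced subgraph `G[B]`. -/
def componentsIn (ends : E → Sym2 V) (B : Set V) : Set (Set V) :=
  {K | ∃ u ∈ B, K = compIn ends B u}

/-- The union of the blocks `V_a, …, V_b`. -/
def unionBlocks (ends : E → Sym2 V) (s : V) (p : ℕ) (C : ℕ → Set E)
    (a b : ℕ) : Set V :=
  ⋃ j ∈ Set.Icc a b, blockOf ends s p C j

/-- `st` encodes the decomposition of the blocks `V_0, …, V_{p+1}` into bundles
`W_0, …, W_{q+1}`: bundle `W_i` consists of the blocks `V_{st i}, …, V_{st (i+1) - 1}`.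
`W_0 = V_0`, and each further bundle is greedily either a single connected block, or a
maximal union of contiguous blocks inducing a disconnected subgraph. -/
def IsBundleSeq (ends : E → Sym2 V) (s : V) (p : ℕ) (C : ℕ → Set E)
    (q : ℕ) (st : ℕ → ℕ) : Prop :=
  st 0 = 0 ∧ st 1 = 1 ∧ st (q + 2) = p + 2 ∧
    (∀ i j : ℕ, i < j → j ≤ q + 2 → st i < st j) ∧
    ∀ i : ℕ, 1 ≤ i → i ≤ q + 1 →
      (st (i + 1) = st i + 1 ∧ ConnIn ends (blockOf ends s p C (st i))) ∨
      (¬ ConnIn ends (blockOf ends s p C (st i)) ∧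
        ¬ ConnIn ends (unionBlocks ends s p C (st i) (st (i + 1) - 1)) ∧
        ∀ j : ℕ, st (i + 1) - 1 < j → j ≤ p + 1 →
          ConnIn ends (unionBlocks ends s p C (st i) j))

/-- The bundle `W_i`. -/
def bundleOf (ends : E → Sym2 V) (s : V) (p : ℕ) (C : ℕ → Set E) (st : ℕ → ℕ)
    (i : ℕ) : Set V :=
  unionBlocks ends s p C (st i) (st (i + 1) - 1)

/-- `C'_i` : the cut (among `C_0, …, C_p`) separating bundle `W_i` from `W_{i+1}`. -/
def interCut (C : ℕ → Set E) (st : ℕ → ℕ) (i : ℕ) : Set E :=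
  C (st (i + 1) - 1)

/-- A bundle `W` is unaffected by `Z` if `N[W]` is contained in a single connected
component of `G - Z`. -/
def Unaffected (ends : E → Sym2 V) (Z : Set E) (W : Set V) : Prop :=
  ∀ u ∈ closedNbhd ends W, ∀ v ∈ closedNbhd ends W, Reach ends Z u v

/-- The stretch `W_{a,b} = W_a ∪ ⋯ ∪ W_b` of bundles. -/
def stretchSet (ends : E → Sym2 V) (s : V) (p : ℕ) (C : ℕ → Set E) (st : ℕ → ℕ)
    (a b : ℕ) : Set V :=
  ⋃ i ∈ Set.Icc a b, bundleOf ends s p C st i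

/-- The left interface of a stretch starting at bundle `W_a`. -/
def leftInterface (ends : E → Sym2 V) (s : V) (p : ℕ) (C : ℕ → Set E) (st : ℕ → ℕ)
    (a : ℕ) : Set V :=
  if a = 0 then {s}
  else {v | v ∈ bundleOf ends s p C st a ∧ ∃ e ∈ interCut C st (a - 1), v ∈ ends e}

/-- The right interface of a stretch ending at bundle `W_b`. -/
def rightInterface (ends : E → Sym2 V) (s t : V) (p : ℕ) (C : ℕ → Set E)
    (st : ℕ → ℕ) (q b : ℕ) : Set V :=
  if b = q + 1 then {t}
  else {v | v ∈ bundleOf ends s p C st b ∧ ∃ e ∈ interCut C st b, v ∈ ends e}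

/-- `W_{a,b}` is a maximal stretch of bundles all affected by `Z`. -/
def MaxAffStretch (ends : E → Sym2 V) (s : V) (p : ℕ) (C : ℕ → Set E)
    (st : ℕ → ℕ) (q : ℕ) (Z : Set E) (a b : ℕ) : Prop :=
  a ≤ b ∧ b ≤ q + 1 ∧
    (∀ i : ℕ, a ≤ i → i ≤ b → ¬ Unaffected ends Z (bundleOf ends s p C st i)) ∧
    (a = 0 ∨ Unaffected ends Z (bundleOf ends s p C st (a - 1))) ∧
    (b = q + 1 ∨ Unaffected ends Z (bundleOf ends s p C st (b + 1)))

/-- `W_{a,b}` is a maximal stretch of bundles affected by `Z` containing both a vertex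
reachable from `s` and a vertex reachable from `t` in `G - Z`. -/
def StronglyAffStretch (ends : E → Sym2 V) (s t : V) (p : ℕ) (C : ℕ → Set E)
    (st : ℕ → ℕ) (q : ℕ) (Z : Set E) (a b : ℕ) : Prop :=
  MaxAffStretch ends s p C st q Z a b ∧
    (stretchSet ends s p C st a b ∩ RS ends Z {s}).Nonempty ∧
    (stretchSet ends s p C st a b ∩ RS ends Z {t}).Nonempty

/-- Adjacency inside the induced subgraph `G[B]` avoiding the edge set `X`. -/
def AdjInX (ends : E → Sym2 V) (B : Set V) (X : Set E) (u v : V) : Prop :=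
  u ∈ B ∧ v ∈ B ∧ ∃ e, e ∉ X ∧ ends e = s(u, v)

/-- Reachability inside `G[B] - X`. -/
def ReachInX (ends : E → Sym2 V) (B : Set V) (X : Set E) : V → V → Prop :=
  Relation.ReflTransGen (AdjInX ends B X)

/-- `X` is a star `(a,b)`-cut of the induced subgraph `H = G[B]`: in `H - X` no path
connects `a` and `b`, and every edge of `X` has exactly one endpoint reachable from
`a` in `H - X`. -/
def IsStarCutIn (ends : E → Sym2 V) (B : Set V) (a b : V) (X : Set E) : Prop :=
  ¬ ReachInX ends B X a b ∧
    ∀ e ∈ X, ∃ u v : V, ends e = s(u, v) ∧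
      ReachInX ends B X a u ∧ ¬ ReachInX ends B X a v

end FlowAug

namespace FlowAug

section Aux

variable {V E : Type}

lemma adj_symm {ends : E → Sym2 V} {X : Set E} {u v : V} (h : Adj ends X u v) :
    Adj ends X v u := by
  obtain ⟨e, he, heq⟩ := h
  exact ⟨e, he, by rw [heq, Sym2.eq_swap]⟩

lemma reach_symm {ends : E → Sym2 V} {X : Set E} {u v : V} (h : Reach ends X u v) :
    Reach ends X v u :=
  (@Relation.ReflTransGen.symmetric _ _ ⟨fun _ _ => adj_symm⟩).symm _ _ h

lemma reach_mono {ends : E → Sym2 V} {X Y : Set E} (hXY : X ⊆ Y) {u v : V}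
    (h : Reach ends Y u v) : Reach ends X u v := by
  induction h with
  | refl => exact .refl
  | tail _ hadj ih =>
      obtain ⟨e, he, heq⟩ := hadj
      exact ih.tail ⟨e, fun hx => he (hXY hx), heq⟩

lemma mem_RS_singleton {ends : E → Sym2 V} {X : Set E} {u v : V} :
    v ∈ RS ends X {u} ↔ Reach ends X u v := by
  simp [RS]

lemma rs_singleton_mono {ends : E → Sym2 V} {X Y : Set E} (hXY : X ⊆ Y) {u : V} :
    RS ends Y {u} ⊆ RS ends X {u} := fun _ hv =>
  mem_RS_singleton.2 (reach_mono hXY (mem_RS_singleton.1 hv))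

lemma path_reach {E' : Type} {ends' : E' → Sym2 V} {s t : V}
    (p : MGPath V E' ends' s t) {X : Set E'}
    (h : ∀ j, p.edge j ∉ X) : Reach ends' X s t := by
  have key : ∀ l : ℕ, ∀ hl : l ≤ p.n,
      Reach ends' X s (p.vert ⟨l, Nat.lt_succ_of_le hl⟩) := by
    intro l
    induction l with
    | zero =>
        intro _
        have h0 : (⟨0, Nat.lt_succ_of_le (Nat.zero_le _)⟩ : Fin (p.n + 1)) = 0 := rfl
        rw [h0, p.vert_zero]
        exact .refl
    | succ l ih =>
        intro hl
        have hl' : l < p.n := hl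
        refine (ih (Nat.le_of_succ_le hl)).tail ⟨p.edge ⟨l, hl'⟩, h _, ?_⟩
        exact p.ends_eq ⟨l, hl'⟩
  have := key p.n le_rfl
  have hlast : (⟨p.n, Nat.lt_succ_of_le le_rfl⟩ : Fin (p.n + 1)) = Fin.last p.n := rfl
  rwa [hlast, p.vert_last] at this

lemma le_cut_ncard {E' : Type} {ends' : E' → Sym2 V} {s t : V} {k : ℕ}
    (P : Fin k → MGPath V E' ends' s t) (hP : EdgeDisjoint P)
    {X : Set E'} (hXfin : X.Finite) (hX : IsCut ends' X {s} {t}) : k ≤ X.ncard := by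
  classical
  have hex : ∀ i : Fin k, ∃ j, (P i).edge j ∈ X := by
    intro i
    by_contra hc
    push_neg at hc
    have hr : Reach ends' X s t := path_reach (P i) hc
    have ht : t ∈ RS ends' X {s} ∩ RS ends' X {t} :=
      ⟨mem_RS_singleton.2 hr, mem_RS_singleton.2 .refl⟩
    rw [hX] at ht
    exact ht
  choose j hj using hex
  have hinj : Function.Injective fun i : Fin k => (P i).edge (j i) := by
    intro i i' h
    exact congrArg Sigma.fst (hP (a₁ := ⟨i, j i⟩) (a₂ := ⟨i', j i'⟩) h)
  have hsub : Set.range (fun i : Fin k => (P i).edge (j i)) ⊆ X := by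
    rintro _ ⟨i, rfl⟩; exact hj i
  calc k = Nat.card (Fin k) := by simp
    _ = (Set.range fun i : Fin k => (P i).edge (j i)).ncard := by
        rw [← Nat.card_coe_set_eq, Nat.card_range_of_injective hinj]
    _ ≤ X.ncard := Set.ncard_le_ncard hsub hXfin

lemma rs_add_subset {m : ℕ} {ends : E → Sym2 V} {s t : V}
    {a : Fin m → Sym2 V} {Y : Set E}
    (hY : IsCut ends Y {s} {t})
    (ha : ∀ j : Fin m, (∃ w, a j = s(s, w) ∧ w ∈ RS ends Y {s}) ∨
               (∃ w, a j = s(w, t) ∧ w ∈ RS ends Y {t})) :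
    RS (Sum.elim ends a) (Sum.inl '' Y) {s} ⊆ RS ends Y {s} := by
  intro x hx
  rw [mem_RS_singleton] at hx ⊢
  induction hx with
  | refl => exact .refl
  | @tail w x _ hadj ih =>
      obtain ⟨ee, hee, heq⟩ := hadj
      cases ee with
      | inl e =>
          exact ih.tail ⟨e, fun he => hee ⟨e, he, rfl⟩, heq⟩
      | inr jj =>
          have heq' : a jj = s(w, x) := heq
          rcases ha jj with ⟨w', haj, hw'⟩ | ⟨w', haj, hw'⟩
          · have : s(s, w') = s(w, x) := by rw [← haj, heq']
            rcases Sym2.eq_iff.1 this with ⟨h1, h2⟩ | ⟨h1, h2⟩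
            · subst h2; exact mem_RS_singleton.1 hw'
            · subst h1; exact .refl
          · have : s(w', t) = s(w, x) := by rw [← haj, heq']
            rcases Sym2.eq_iff.1 this with ⟨h1, h2⟩ | ⟨h1, h2⟩
            · have hw2 : w ∈ RS ends Y {s} ∩ RS ends Y {t} :=
                ⟨mem_RS_singleton.2 ih, h1 ▸ hw'⟩
              rw [hY] at hw2
              exact hw2.elim
            · subst h2
              have hw2 : t ∈ RS ends Y {s} ∩ RS ends Y {t} :=
                ⟨mem_RS_singleton.2 ih, mem_RS_singleton.2 .refl⟩
              rw [hY] at hw2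
              exact hw2.elim

lemma rs_add_subset_t {m : ℕ} {ends : E → Sym2 V} {s t : V}
    {a : Fin m → Sym2 V} {Y : Set E}
    (hY : IsCut ends Y {s} {t})
    (ha : ∀ j : Fin m, (∃ w, a j = s(s, w) ∧ w ∈ RS ends Y {s}) ∨
               (∃ w, a j = s(w, t) ∧ w ∈ RS ends Y {t})) :
    RS (Sum.elim ends a) (Sum.inl '' Y) {t} ⊆ RS ends Y {t} := by
  have hY' : IsCut ends Y {t} {s} := by rw [IsCut, Set.inter_comm]; exact hY
  refine rs_add_subset (s := t) (t := s) hY' ?_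
  intro j
  rcases ha j with ⟨w, h1, h2⟩ | ⟨w, h1, h2⟩
  · exact Or.inr ⟨w, by rw [h1, Sym2.eq_swap], h2⟩
  · exact Or.inl ⟨w, by rw [h1, Sym2.eq_swap], h2⟩

/-- An auxiliary path `s — u — v — t` using two added edges and one original edge. -/
def tripath {m : ℕ} (ends : E → Sym2 V) (a : Fin m → Sym2 V) (s t u v : V)
    (e : E) (j1 j2 : Fin m)
    (h1 : a j1 = s(s, u)) (h2 : ends e = s(u, v)) (h3 : a j2 = s(v, t)) :
    MGPath V (E ⊕ Fin m) (Sum.elim ends a) s t where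
  n := 3
  vert := fun i => match i with
    | ⟨0, _⟩ => s
    | ⟨1, _⟩ => u
    | ⟨2, _⟩ => v
    | ⟨3, _⟩ => t
  edge := fun i => match i with
    | ⟨0, _⟩ => Sum.inr j1
    | ⟨1, _⟩ => Sum.inl e
    | ⟨2, _⟩ => Sum.inr j2
  vert_zero := rfl
  vert_last := rfl
  ends_eq := fun i => match i with
    | ⟨0, _⟩ => h1
    | ⟨1, _⟩ => h2
    | ⟨2, _⟩ => h3

lemma tripath_uniqueZ {m : ℕ} {ends : E → Sym2 V} {a : Fin m → Sym2 V}
    {s t u v : V} {e : E} {j1 j2 : Fin m} {h1 h2 h3} {Z : Set E} (he : e ∈ Z) :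
    ∃! j : Fin (tripath ends a s t u v e j1 j2 h1 h2 h3).n,
      (tripath ends a s t u v e j1 j2 h1 h2 h3).edge j ∈ Sum.inl '' Z := by
  have h13 : 1 < (tripath ends a s t u v e j1 j2 h1 h2 h3).n := by
    show (1 : ℕ) < 3; norm_num
  refine ⟨⟨1, h13⟩, ⟨e, he, rfl⟩, ?_⟩
  rintro ⟨jv, hjv⟩ hj
  have hjv3 : jv < 3 := hjv
  interval_cases jv
  · obtain ⟨e', -, he'⟩ := hj
    have he2 : Sum.inl e' = Sum.inr j1 := he'
    simp at he2
  · rfl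
  · obtain ⟨e', -, he'⟩ := hj
    have he2 : Sum.inl e' = Sum.inr j2 := he'
    simp at he2

lemma tripath_disjoint {m : ℕ} {ends : E → Sym2 V} {a : Fin m → Sym2 V}
    {s t : V} {k : ℕ} {u v : Fin k → V} {f : Fin k → E} {j1 j2 : Fin k → Fin m}
    {h1 : ∀ i, a (j1 i) = s(s, u i)} {h2 : ∀ i, ends (f i) = s(u i, v i)}
    {h3 : ∀ i, a (j2 i) = s(v i, t)}
    (hf : Function.Injective f) (hj1 : Function.Injective j1)
    (hj2 : Function.Injective j2) (hj12 : ∀ i i', j1 i ≠ j2 i') :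
    EdgeDisjoint (fun i => tripath ends a s t (u i) (v i) (f i) (j1 i) (j2 i)
      (h1 i) (h2 i) (h3 i)) := by
  rintro ⟨i, ⟨jv, hjv⟩⟩ ⟨i', ⟨jv', hjv'⟩⟩ h
  have hjv3 : jv < 3 := hjv
  have hjv3' : jv' < 3 := hjv'
  interval_cases jv <;> interval_cases jv'
  · have h' : Sum.inr (j1 i) = Sum.inr (j1 i') := h
    cases hj1 (Sum.inr.inj h'); rfl
  · have h' : Sum.inr (j1 i) = Sum.inl (f i') := h
    simp at h'
  · have h' : Sum.inr (j1 i) = Sum.inr (j2 i') := h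
    exact absurd (Sum.inr.inj h') (hj12 i i')
  · have h' : Sum.inl (f i) = Sum.inr (j1 i') := h
    simp at h'
  · have h' : Sum.inl (f i) = Sum.inl (f i') := h
    cases hf (Sum.inl.inj h'); rfl
  · have h' : Sum.inl (f i) = Sum.inr (j2 i') := h
    simp at h'
  · have h' : Sum.inr (j2 i) = Sum.inr (j1 i') := h
    exact absurd (Sum.inr.inj h').symm (hj12 i' i)
  · have h' : Sum.inr (j2 i) = Sum.inl (f i') := h
    simp at h'
  · have h' : Sum.inr (j2 i) = Sum.inr (j2 i') := h
    cases hj2 (Sum.inr.inj h'); rfl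

end Aux

/-- For a special `(s,t)`-cut `Z` with `λ* = |Z_{s,t}|` there exists a
`λ*`-flow-augmenting multiset `A` of vertex pairs compatible with `Z` together with a
witnessing `(s,t)`-flow for `Z` in `G + A` of cardinality `λ*`.  The multiset `A` is
modelled as a family `a : Fin m → Sym2 V` of vertex pairs; `G + A` is the multigraph
with edge type `E ⊕ Fin m` and endpoint map `Sum.elim ends a`. -/
theorem specialCut_flowAugmenting_and_witnessingFlow {V E : Type} [Fintype V] [Fintype E]
    (ends : E → Sym2 V) (hloop : ∀ e, ¬ (ends e).IsDiag)
    (s t : V) (hst : s ≠ t)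
    (Z : Set E) (hZ : IsSpecial ends s t Z)
    (lamStar : ℕ) (hlamStar : lamStar = (Zst ends s t Z).ncard) :
    ∃ (m : ℕ) (a : Fin m → Sym2 V),
      (∀ (i : Fin m) (u v : V), a i = s(u, v) → Reach ends Z u v) ∧
      lamStar ≤ lamCut (Sum.elim ends a) s t ∧
      ∃ P : Fin lamStar → MGPath V (E ⊕ Fin m) (Sum.elim ends a) s t,
        IsWitnessingFlow (Sum.elim ends a) s t (Sum.inl '' Z) P := by
  classical
  obtain ⟨hZcut, hZstcut⟩ := hZ
  set Zs := Zst ends s t Z with hZsdef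
  have hZsub : Zs ⊆ Z := fun e he => he.1
  -- enumerate Z_{s,t}
  have hfin : Zs.Finite := Set.toFinite _
  haveI : Fintype Zs := hfin.fintype
  have hcard : Fintype.card Zs = lamStar := by
    rw [hlamStar, Set.ncard_eq_toFinset_card', Set.toFinset_card]
  let eqv : Zs ≃ Fin lamStar := Fintype.equivFinOfCardEq hcard
  set f : Fin lamStar → E := fun i => (eqv.symm i : E) with hf
  have hfmem : ∀ i, f i ∈ Zs := fun i => (eqv.symm i).2
  have hfsurj : ∀ x ∈ Zs, ∃ i, f i = x := fun x hx =>
    ⟨eqv ⟨x, hx⟩, by simp [hf]⟩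
  have hfinj : Function.Injective f := fun i i' h =>
    eqv.symm.injective (Subtype.ext h)
  have hexuv : ∀ i, ∃ u v, ends (f i) = s(u, v) ∧
      u ∈ RS ends Z {s} ∧ v ∈ RS ends Z {t} := fun i => (hfmem i).2
  choose u v hends hu hv using hexuv
  -- the augmenting pairs
  set m := lamStar + lamStar with hm
  set a : Fin m → Sym2 V := fun j =>
    Sum.elim (fun i => s(s, u i)) (fun i => s(v i, t)) (finSumFinEquiv.symm j)
    with ha
  set j1 : Fin lamStar → Fin m := fun i => finSumFinEquiv (Sum.inl i) with hj1
  set j2 : Fin lamStar → Fin m := fun i => finSumFinEquiv (Sum.inr i) with hj2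
  have haj1 : ∀ i, a (j1 i) = s(s, u i) := by
    intro i
    simp only [ha, hj1, Equiv.symm_apply_apply, Sum.elim_inl]
  have haj2 : ∀ i, a (j2 i) = s(v i, t) := by
    intro i
    simp only [ha, hj2, Equiv.symm_apply_apply, Sum.elim_inr]
  have hj1inj : Function.Injective j1 := by
    intro i i' h
    have h' : finSumFinEquiv (Sum.inl i) = finSumFinEquiv (Sum.inl i') := h
    simpa using finSumFinEquiv.injective h'
  have hj2inj : Function.Injective j2 := by
    intro i i' h
    have h' : finSumFinEquiv (Sum.inr i) = finSumFinEquiv (Sum.inr i') := h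
    simpa using finSumFinEquiv.injective h'
  have hj12 : ∀ i i', j1 i ≠ j2 i' := by
    intro i i' h
    have := finSumFinEquiv.injective h
    simp at this
  -- the property of `a` needed for the reachability lemmas
  have haprop : ∀ Y : Set E, Y ⊆ Z → ∀ j : Fin m,
      (∃ w, a j = s(s, w) ∧ w ∈ RS ends Y {s}) ∨
      (∃ w, a j = s(w, t) ∧ w ∈ RS ends Y {t}) := by
    intro Y hYZ j
    cases hsum : finSumFinEquiv.symm j with
    | inl i => exact Or.inl ⟨u i, by simp [ha, hsum], rs_singleton_mono hYZ (hu i)⟩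
    | inr i => exact Or.inr ⟨v i, by simp [ha, hsum], rs_singleton_mono hYZ (hv i)⟩
  -- reachability in the augmented graph
  have hRSZs_s := rs_add_subset (a := a) hZstcut (haprop Zs hZsub)
  have hRSZs_t := rs_add_subset_t (a := a) hZstcut (haprop Zs hZsub)
  have hRSZ_s := rs_add_subset (a := a) hZcut (haprop Z subset_rfl)
  have hRSZ_t := rs_add_subset_t (a := a) hZcut (haprop Z subset_rfl)
  -- `inl '' Zs` is a cut of the right size in the augmented graph
  have hcutZs : IsCut (Sum.elim ends a) (Sum.inl '' Zs) {s} {t} := by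
    rw [IsCut, ← Set.subset_empty_iff, ← hZstcut]
    exact Set.inter_subset_inter hRSZs_s hRSZs_t
  have hncard : (Sum.inl '' Zs : Set (E ⊕ Fin m)).ncard = lamStar := by
    rw [Set.ncard_image_of_injective _ Sum.inl_injective, hlamStar]
  -- the path family
  set P : Fin lamStar → MGPath V (E ⊕ Fin m) (Sum.elim ends a) s t := fun i =>
    tripath ends a s t (u i) (v i) (f i) (j1 i) (j2 i)
      (haj1 i) (hends i) (haj2 i) with hP
  have hdisj : EdgeDisjoint P :=
    tripath_disjoint hfinj hj1inj hj2inj hj12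
  -- the value of lamCut in the augmented graph
  have hle : lamCut (Sum.elim ends a) s t ≤ lamStar := by
    have := Nat.sInf_le (s := {n | ∃ X : Set (E ⊕ Fin m),
      IsCut (Sum.elim ends a) X {s} {t} ∧ X.ncard = n})
      ⟨Sum.inl '' Zs, hcutZs, rfl⟩
    rwa [hncard] at this
  have hge : lamStar ≤ lamCut (Sum.elim ends a) s t := by
    have hne : {n | ∃ X : Set (E ⊕ Fin m),
        IsCut (Sum.elim ends a) X {s} {t} ∧ X.ncard = n}.Nonempty :=
      ⟨_, Sum.inl '' Zs, hcutZs, rfl⟩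
    obtain ⟨X, hXcut, hXcard⟩ := Nat.sInf_mem hne
    calc lamStar ≤ X.ncard := le_cut_ncard P hdisj (Set.toFinite X) hXcut
      _ = lamCut (Sum.elim ends a) s t := hXcard
  refine ⟨m, a, ?_, hge, P, le_antisymm hge hle, hdisj, ?_, ?_⟩
  · -- compatibility of the augmenting pairs
    intro i x y hxy
    rcases haprop Z subset_rfl i with ⟨w, haw, hw⟩ | ⟨w, haw, hw⟩
    · have : s(s, w) = s(x, y) := by rw [← haw, hxy]
      rcases Sym2.eq_iff.1 this with ⟨h1, h2⟩ | ⟨h1, h2⟩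
      · subst h1; subst h2; exact mem_RS_singleton.1 hw
      · subst h1; subst h2; exact reach_symm (mem_RS_singleton.1 hw)
    · have : s(w, t) = s(x, y) := by rw [← haw, hxy]
      rcases Sym2.eq_iff.1 this with ⟨h1, h2⟩ | ⟨h1, h2⟩
      · subst h1; subst h2; exact reach_symm (mem_RS_singleton.1 hw)
      · subst h1; subst h2; exact mem_RS_singleton.1 hw
  · -- every edge of Z_{s,t} in the augmented graph lies on a path
    rintro ee ⟨heeZ, x, y, hxy, hx, hy⟩
    obtain ⟨e, heZ, rfl⟩ := heeZ
    have hx' : x ∈ RS ends Z {s} := hRSZ_s hx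
    have hy' : y ∈ RS ends Z {t} := hRSZ_t hy
    have heZs : e ∈ Zs := ⟨heZ, x, y, hxy, hx', hy'⟩
    obtain ⟨i, rfl⟩ := hfsurj e heZs
    have h13 : 1 < (P i).n := by show (1 : ℕ) < 3; norm_num
    exact ⟨i, ⟨1, h13⟩, rfl⟩
  · -- each path contains exactly one edge of Z
    intro i
    exact tripath_uniqueZ (hZsub (hfmem i))

end FlowAug
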